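/- arXiv:2311.15502 — 4 statements merged into one kernel-verified Lean document; each statement's English description precedes it below -/
import Mathlib

section
/- Under SCAR, the expectation of the partial empirical risk R̂ᴾ_k(f_k) = ((π̄_k + π_k − 1)/n_k^N) Σ_{i=1}^{n_k^N} ℓ(f_k(x_{k,i}^N)) + ((1−π̄_k)/n_k^U) Σ_{i=1}^{n_k^U} ℓ(f_k(x_{k,i}^U)) equals π_k E_{p(x|y=k)}[ℓ(f_k(x))], and is in particular nonnegative. -/
open MeasureTheory

/-- under SCAR, the expectation of the partial empirical risk
R̂ᴾ_k(f_k) = ((π̄+π−1)/n^N) Σ_i ℓ(f(x_i^N)) + ((1−π̄)/n^U) Σ_i ℓ(f(x_i^U))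
equals π E_{p(x|y=k)}[ℓ(f(x))] and is nonnegative. -/
theorem partial_risk_expectation
    {X Ω : Type*} [MeasurableSpace X] [MeasurableSpace Ω]
    (μΩ : Measure Ω) [IsProbabilityMeasure μΩ]
    (μP μN μbar1 μbar0 : Measure X)
    [IsProbabilityMeasure μP] [IsProbabilityMeasure μN]
    [IsProbabilityMeasure μbar1] [IsProbabilityMeasure μbar0]
    (π πbar ck : ℝ) (l : ℝ → ℝ) (f : X → ℝ)
    (nN nU : ℕ) (hnN : 0 < nN) (hnU : 0 < nU)
    (XN : Fin nN → Ω → X) (XU : Fin nU → Ω → X)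
    (hlawN : ∀ i, Measure.map (XN i) μΩ = μbar1)
    (hlawU : ∀ i, Measure.map (XU i) μΩ = μbar0)
    -- SCAR: p(x|ȳ_k=1) = p(x|y≠k) and π̄_k = c_k (1 − π_k)
    (hscar : μbar1 = μN) (hpibar : πbar = ck * (1 - π))
    -- both mixtures equal the marginal p(x)
    (hmix : (ENNReal.ofReal πbar) • μbar1 + (ENNReal.ofReal (1 - πbar)) • μbar0
      = (ENNReal.ofReal π) • μP + (ENNReal.ofReal (1 - π)) • μN)
    (hl : ∀ z, 0 ≤ l z)
    (hπ0 : 0 ≤ π) (hπ1 : π ≤ 1) (hπbar0 : 0 ≤ πbar) (hπbar1 : πbar ≤ 1)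
    (hintP : Integrable (fun x => l (f x)) μP)
    (hint1 : Integrable (fun x => l (f x)) μbar1)
    (hint0 : Integrable (fun x => l (f x)) μbar0)
    (hintΩN : ∀ i, Integrable (fun ω => l (f (XN i ω))) μΩ)
    (hintΩU : ∀ i, Integrable (fun ω => l (f (XU i ω))) μΩ) :
    (∫ ω, ((πbar + π - 1) / (nN : ℝ) * ∑ i, l (f (XN i ω))
          + (1 - πbar) / (nU : ℝ) * ∑ i, l (f (XU i ω))) ∂μΩ
        = π * ∫ x, l (f x) ∂μP)
      ∧ 0 ≤ π * ∫ x, l (f x) ∂μP := by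
  set g : X → ℝ := fun x => l (f x) with hg
  have hIP0 : 0 ≤ ∫ x, g x ∂μP := integral_nonneg fun x => hl _
  -- change of variables
  have hN : ∀ i, ∫ ω, g (XN i ω) ∂μΩ = ∫ x, g x ∂μbar1 := by
    intro i
    have ham : AEMeasurable (XN i) μΩ := by
      by_contra h
      have := Measure.map_of_not_aemeasurable h
      rw [hlawN i] at this
      exact (IsProbabilityMeasure.ne_zero μbar1) this
    rw [← hlawN i, integral_map ham ((hlawN i).symm ▸ hint1.aestronglyMeasurable)]
  have hU : ∀ i, ∫ ω, g (XU i ω) ∂μΩ = ∫ x, g x ∂μbar0 := by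
    intro i
    have ham : AEMeasurable (XU i) μΩ := by
      by_contra h
      have := Measure.map_of_not_aemeasurable h
      rw [hlawU i] at this
      exact (IsProbabilityMeasure.ne_zero μbar0) this
    rw [← hlawU i, integral_map ham ((hlawU i).symm ▸ hint0.aestronglyMeasurable)]
  -- mixture identity for integrals
  have key : πbar * ∫ x, g x ∂μbar1 + (1 - πbar) * ∫ x, g x ∂μbar0
      = π * ∫ x, g x ∂μP + (1 - π) * ∫ x, g x ∂μbar1 := by
    have hintN : Integrable g μN := hscar ▸ hint1
    have h1 : Integrable g ((ENNReal.ofReal πbar) • μbar1) :=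
      hint1.smul_measure ENNReal.ofReal_ne_top
    have h0 : Integrable g ((ENNReal.ofReal (1 - πbar)) • μbar0) :=
      hint0.smul_measure ENNReal.ofReal_ne_top
    have h2 : Integrable g ((ENNReal.ofReal π) • μP) :=
      hintP.smul_measure ENNReal.ofReal_ne_top
    have h3 : Integrable g ((ENNReal.ofReal (1 - π)) • μN) :=
      hintN.smul_measure ENNReal.ofReal_ne_top
    have := congrArg (fun μ => ∫ x, g x ∂μ) hmix
    simp only [integral_add_measure h1 h0, integral_add_measure h2 h3,
      integral_smul_measure, ENNReal.toReal_ofReal hπbar0, ENNReal.toReal_ofReal hπ0,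
      ENNReal.toReal_ofReal (by linarith : (0:ℝ) ≤ 1 - πbar),
      ENNReal.toReal_ofReal (by linarith : (0:ℝ) ≤ 1 - π), smul_eq_mul] at this
    rw [this, hscar]
  constructor
  · have hi1 : Integrable (fun ω => (πbar + π - 1) / (nN : ℝ) * ∑ i, g (XN i ω)) μΩ :=
      (integrable_finset_sum _ fun i _ => hintΩN i).const_mul _
    have hi2 : Integrable (fun ω => (1 - πbar) / (nU : ℝ) * ∑ i, g (XU i ω)) μΩ :=
      (integrable_finset_sum _ fun i _ => hintΩU i).const_mul _
    rw [integral_add hi1 hi2, integral_const_mul, integral_const_mul,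
      integral_finset_sum _ fun i _ => hintΩN i,
      integral_finset_sum _ fun i _ => hintΩU i]
    simp only [(show ∀ i, ∫ ω, l (f (XN i ω)) ∂μΩ = ∫ x, g x ∂μbar1 from hN),
      (show ∀ i, ∫ ω, l (f (XU i ω)) ∂μΩ = ∫ x, g x ∂μbar0 from hU), Finset.sum_const, Finset.card_univ, Fintype.card_fin, nsmul_eq_mul]
    have hnN' : (nN : ℝ) ≠ 0 := Nat.cast_ne_zero.mpr hnN.ne'
    have hnU' : (nU : ℝ) ≠ 0 := Nat.cast_ne_zero.mpr hnU.ne'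
    have e1 : (πbar + π - 1) / (nN : ℝ) * ((nN : ℝ) * ∫ x, g x ∂μbar1)
        = (πbar + π - 1) * ∫ x, g x ∂μbar1 := by field_simp
    have e2 : (1 - πbar) / (nU : ℝ) * ((nU : ℝ) * ∫ x, g x ∂μbar0)
        = (1 - πbar) * ∫ x, g x ∂μbar0 := by field_simp
    rw [e1, e2]; linarith [key]
  · exact mul_nonneg hπ0 hIP0
end

section
/- The empirical risk estimator R̂(f_1,...,f_q) = Σ_{k=1}^q R̂_k(f_k), where R̂_k(f_k) = (1/n_k^N) Σ_i [(1−π_k)ℓ(−f_k(x_{k,i}^N)) + (π̄_k+π_k−1)ℓ(f_k(x_{k,i}^N))] + ((1−π̄_k)/n_k^U) Σ_i ℓ(f_k(x_{k,i}^U)), is an unbiased estimator of the ordinary one-versus-rest classification risk R(f_1,...,f_q) under the SCAR assumption. -/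
open MeasureTheory

lemma map_prob_aemeasurable {Ω X : Type*} [MeasurableSpace Ω] [MeasurableSpace X]
    {μ : Measure Ω} {T : Ω → X} {ν : Measure X} [IsProbabilityMeasure ν]
    (h : μ.map T = ν) : AEMeasurable T μ := by
  by_contra hc
  rw [Measure.map_of_not_aemeasurable hc] at h
  exact (IsProbabilityMeasure.ne_zero ν) h.symm

lemma integral_comp_law {Ω X : Type*} [MeasurableSpace Ω] [MeasurableSpace X]
    {μ : Measure Ω} {T : Ω → X} {ν : Measure X} [IsProbabilityMeasure ν]
    (h : μ.map T = ν) {g : X → ℝ} (hg : AEStronglyMeasurable g ν) :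
    ∫ ω, g (T ω) ∂μ = ∫ x, g x ∂ν := by
  rw [← h]
  exact (integral_map (map_prob_aemeasurable h) (h ▸ hg)).symm

lemma erase_swap {q : ℕ} (F : Fin q → Fin q → ℝ) :
    ∑ k, ∑ j ∈ Finset.univ.erase k, F k j = ∑ k, ∑ j ∈ Finset.univ.erase k, F j k := by
  have h1 : ∀ G : Fin q → Fin q → ℝ, ∑ k, ∑ j ∈ Finset.univ.erase k, G k j
      = (∑ k, ∑ j, G k j) - ∑ k, G k k := by
    intro G
    rw [← Finset.sum_sub_distrib]
    exact Finset.sum_congr rfl fun k _ => Finset.sum_erase_eq_sub (Finset.mem_univ k)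
  rw [h1, h1, Finset.sum_comm]

/-- under SCAR, the empirical risk estimator
R̂(f_1,...,f_q) = Σ_k R̂_k(f_k) is an unbiased estimator of the ordinary
one-versus-rest classification risk R(f_1,...,f_q) = E_{p(x,y)}[ℓ(f_y(x)) + Σ_{j≠y} ℓ(−f_j(x))]. -/
theorem unbiased_risk_estimator
    {X Ω : Type*} [MeasurableSpace X] [MeasurableSpace Ω] {q : ℕ}
    (μΩ : Measure Ω) [IsProbabilityMeasure μΩ]
    (μP μN μbar1 μbar0 : Fin q → Measure X)
    [∀ k, IsProbabilityMeasure (μP k)] [∀ k, IsProbabilityMeasure (μN k)]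
    [∀ k, IsProbabilityMeasure (μbar1 k)] [∀ k, IsProbabilityMeasure (μbar0 k)]
    (π πbar : Fin q → ℝ) (l : ℝ → ℝ) (f : Fin q → X → ℝ)
    (nN nU : Fin q → ℕ) (hnN : ∀ k, 0 < nN k) (hnU : ∀ k, 0 < nU k)
    (XN : ∀ k, Fin (nN k) → Ω → X) (XU : ∀ k, Fin (nU k) → Ω → X)
    (hlawN : ∀ k i, Measure.map (XN k i) μΩ = μbar1 k)
    (hlawU : ∀ k i, Measure.map (XU k i) μΩ = μbar0 k)
    -- SCAR: p(x|ȳ_k=1) = p(x|y≠k)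
    (hscar : ∀ k, μbar1 k = μN k)
    -- both mixtures equal the marginal p(x)
    (hmix : ∀ k, (ENNReal.ofReal (πbar k)) • μbar1 k + (ENNReal.ofReal (1 - πbar k)) • μbar0 k
      = (ENNReal.ofReal (π k)) • μP k + (ENNReal.ofReal (1 - π k)) • μN k)
    -- (1−π_k) p(x|y≠k) = Σ_{j≠k} π_j p(x|y=j)
    (hrel : ∀ k, (ENNReal.ofReal (1 - π k)) • μN k
      = ∑ j ∈ Finset.univ.erase k, (ENNReal.ofReal (π j)) • μP j)
    (hl : ∀ z, 0 ≤ l z)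
    (hπ : ∀ k, 0 ≤ π k) (hsum : ∑ k, π k = 1)
    (hπbar : ∀ k, 0 ≤ πbar k) (hπbar1 : ∀ k, πbar k ≤ 1)
    (hint : ∀ k j, Integrable (fun x => l (f k x)) (μP j))
    (hint' : ∀ k j, Integrable (fun x => l (-(f k x))) (μP j))
    (hintΩN : ∀ k i, Integrable (fun ω => l (f k (XN k i ω))) μΩ)
    (hintΩN' : ∀ k i, Integrable (fun ω => l (-(f k (XN k i ω)))) μΩ)
    (hintΩU : ∀ k i, Integrable (fun ω => l (f k (XU k i ω))) μΩ) :
    ∫ ω, ∑ k, ((1 / (nN k : ℝ)) * ∑ i, ((1 - π k) * l (-(f k (XN k i ω)))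
            + (πbar k + π k - 1) * l (f k (XN k i ω)))
          + ((1 - πbar k) / (nU k : ℝ)) * ∑ i, l (f k (XU k i ω))) ∂μΩ
      = ∑ k, (π k) * ∫ x, (l (f k x)
          + ∑ j ∈ Finset.univ.erase k, l (-(f j x))) ∂(μP k) := by
  classical
  have hπ1 : ∀ k, π k ≤ 1 := fun k =>
    hsum ▸ Finset.single_le_sum (fun j _ => hπ j) (Finset.mem_univ k)
  have hlawN' : ∀ k i, Measure.map (XN k i) μΩ = μN k := fun k i => (hscar k) ▸ hlawN k i
  have hIntN1 : ∀ k, Integrable (fun x => l (f k x)) ((ENNReal.ofReal (1 - π k)) • μN k) := by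
    intro k
    rw [hrel k, integrable_finset_sum_measure]
    exact fun m _ => (hint k m).smul_measure ENNReal.ofReal_ne_top
  have hIntN1' : ∀ k, Integrable (fun x => l (-(f k x))) ((ENNReal.ofReal (1 - π k)) • μN k) := by
    intro k
    rw [hrel k, integrable_finset_sum_measure]
    exact fun m _ => (hint' k m).smul_measure ENNReal.ofReal_ne_top
  have hIntMix : ∀ k, Integrable (fun x => l (f k x))
      ((ENNReal.ofReal (π k)) • μP k + (ENNReal.ofReal (1 - π k)) • μN k) := fun k =>
    ((hint k k).smul_measure ENNReal.ofReal_ne_top).add_measure (hIntN1 k)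
  -- key per-k identity
  have key : ∀ k : Fin q,
      (1 / (nN k : ℝ)) * (∑ i, ((1 - π k) * (∫ ω, l (-(f k (XN k i ω))) ∂μΩ)
          + (πbar k + π k - 1) * (∫ ω, l (f k (XN k i ω)) ∂μΩ)))
        + ((1 - πbar k) / (nU k : ℝ)) * (∑ i, ∫ ω, l (f k (XU k i ω)) ∂μΩ)
      = (π k * ∫ x, l (f k x) ∂(μP k))
        + ∑ j ∈ Finset.univ.erase k, π j * ∫ x, l (-(f k x)) ∂(μP j) := by
    intro k
    have claimA : ∀ i, (1 - π k) * (∫ ω, l (-(f k (XN k i ω))) ∂μΩ)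
        = ∑ j ∈ Finset.univ.erase k, π j * ∫ x, l (-(f k x)) ∂(μP j) := by
      intro i
      by_cases hk1 : π k = 1
      · have h := hrel k
        rw [hk1] at h
        simp only [sub_self, ENNReal.ofReal_zero, zero_smul] at h
        have h2 := congrArg (fun μ : Measure X => μ Set.univ) h.symm
        simp only [Measure.finset_sum_apply, Measure.smul_apply, measure_univ,
          smul_eq_mul, mul_one, Measure.coe_zero, Pi.zero_apply] at h2
        have h0 : ∀ j ∈ Finset.univ.erase k, π j = 0 := by
          intro j hj
          have h3 := (Finset.sum_eq_zero_iff.mp h2) j hj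
          have h4 := ENNReal.ofReal_eq_zero.mp h3
          linarith [hπ j]
        rw [hk1]
        simp only [sub_self, zero_mul]
        exact (Finset.sum_eq_zero fun j hj => by rw [h0 j hj, zero_mul]).symm
      · have hlt : π k < 1 := lt_of_le_of_ne (hπ1 k) hk1
        have hc0 : ENNReal.ofReal (1 - π k) ≠ 0 := by
          simp only [ne_eq, ENNReal.ofReal_eq_zero, not_le]; linarith
        have intN' : Integrable (fun x => l (-(f k x))) (μN k) :=
          (integrable_smul_measure hc0 ENNReal.ofReal_ne_top).mp (hIntN1' k)
        have hE : ∫ ω, l (-(f k (XN k i ω))) ∂μΩ = ∫ x, l (-(f k x)) ∂(μN k) :=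
          integral_comp_law (hlawN' k i) intN'.1
        rw [hE]
        have hsm : (1 - π k) * ∫ x, l (-(f k x)) ∂(μN k)
            = ∫ x, l (-(f k x)) ∂((ENNReal.ofReal (1 - π k)) • μN k) := by
          rw [integral_smul_measure, ENNReal.toReal_ofReal (by linarith), smul_eq_mul]
        rw [hsm, hrel k, integral_finset_sum_measure
          (fun j _ => (hint' k j).smul_measure ENNReal.ofReal_ne_top)]
        exact Finset.sum_congr rfl fun j _ => by
          rw [integral_smul_measure, ENNReal.toReal_ofReal (hπ j), smul_eq_mul]
    obtain ⟨CN, CU, hN, hU, hCNCU⟩ : ∃ CN CU : ℝ,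
        (∀ i, (πbar k + π k - 1) * (∫ ω, l (f k (XN k i ω)) ∂μΩ) = CN)
        ∧ (∀ i, (1 - πbar k) * (∫ ω, l (f k (XU k i ω)) ∂μΩ) = CU)
        ∧ CN + CU = π k * ∫ x, l (f k x) ∂(μP k) := by
      have hmixk : (ENNReal.ofReal (πbar k)) • μN k + (ENNReal.ofReal (1 - πbar k)) • μbar0 k
          = (ENNReal.ofReal (π k)) • μP k + (ENNReal.ofReal (1 - π k)) • μN k := by
        have h := hmix k; rw [hscar k] at h; exact h
      by_cases hdeg : πbar k = 0 ∧ π k = 1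
      · obtain ⟨hb0, hk1⟩ := hdeg
        have hB : μbar0 k = μP k := by
          have h := hmixk
          rw [hb0, hk1] at h
          simpa using h
        have intB0 : Integrable (fun x => l (f k x)) (μbar0 k) := hB ▸ hint k k
        have hEU : ∀ i, ∫ ω, l (f k (XU k i ω)) ∂μΩ = ∫ x, l (f k x) ∂(μbar0 k) :=
          fun i => integral_comp_law (hlawU k i) intB0.1
        refine ⟨0, ∫ x, l (f k x) ∂(μbar0 k), fun i => ?_, fun i => ?_, ?_⟩
        · rw [hb0, hk1]; ring
        · rw [hEU i, hb0]; ring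
        · rw [hB, hk1]; ring
      · have intN : Integrable (fun x => l (f k x)) (μN k) := by
          by_cases hk1 : π k = 1
          · have hb0 : πbar k ≠ 0 := fun h => hdeg ⟨h, hk1⟩
            have hble : (ENNReal.ofReal (πbar k)) • μN k
                ≤ (ENNReal.ofReal (π k)) • μP k + (ENNReal.ofReal (1 - π k)) • μN k := by
              rw [← hmixk]; exact Measure.le_add_right le_rfl
            have hI : Integrable (fun x => l (f k x)) ((ENNReal.ofReal (πbar k)) • μN k) :=
              (hIntMix k).mono_measure hble
            have hc0 : ENNReal.ofReal (πbar k) ≠ 0 := by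
              simp only [ne_eq, ENNReal.ofReal_eq_zero, not_le]
              exact lt_of_le_of_ne (hπbar k) (Ne.symm hb0)
            exact (integrable_smul_measure hc0 ENNReal.ofReal_ne_top).mp hI
          · have hc0 : ENNReal.ofReal (1 - π k) ≠ 0 := by
              simp only [ne_eq, ENNReal.ofReal_eq_zero, not_le]
              have := lt_of_le_of_ne (hπ1 k) hk1
              linarith
            exact (integrable_smul_measure hc0 ENNReal.ofReal_ne_top).mp (hIntN1 k)
        have hEN : ∀ i, ∫ ω, l (f k (XN k i ω)) ∂μΩ = ∫ x, l (f k x) ∂(μN k) :=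
          fun i => integral_comp_law (hlawN' k i) intN.1
        by_cases hb1 : πbar k = 1
        · have hmeq : μN k
              = (ENNReal.ofReal (π k)) • μP k + (ENNReal.ofReal (1 - π k)) • μN k := by
            have h := hmixk
            rw [hb1] at h
            simpa using h
          have hTint : ∫ x, l (f k x) ∂(μN k)
              = π k * (∫ x, l (f k x) ∂(μP k)) + (1 - π k) * (∫ x, l (f k x) ∂(μN k)) := by
            conv_lhs => rw [hmeq]
            rw [integral_add_measure ((hint k k).smul_measure ENNReal.ofReal_ne_top)
                (intN.smul_measure ENNReal.ofReal_ne_top),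
              integral_smul_measure, integral_smul_measure,
              ENNReal.toReal_ofReal (hπ k), ENNReal.toReal_ofReal (by linarith [hπ1 k]),
              smul_eq_mul, smul_eq_mul]
          refine ⟨(πbar k + π k - 1) * ∫ x, l (f k x) ∂(μN k), 0,
            fun i => by rw [hEN i], fun i => by rw [hb1]; ring, ?_⟩
          rw [hb1]
          linear_combination hTint
        · have hblt : πbar k < 1 := lt_of_le_of_ne (hπbar1 k) hb1
          have hble : (ENNReal.ofReal (1 - πbar k)) • μbar0 k
              ≤ (ENNReal.ofReal (π k)) • μP k + (ENNReal.ofReal (1 - π k)) • μN k := by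
            rw [← hmixk]; exact Measure.le_add_left le_rfl
          have intB0 : Integrable (fun x => l (f k x)) (μbar0 k) := by
            have hI : Integrable (fun x => l (f k x)) ((ENNReal.ofReal (1 - πbar k)) • μbar0 k) :=
              (hIntMix k).mono_measure hble
            have hc0 : ENNReal.ofReal (1 - πbar k) ≠ 0 := by
              simp only [ne_eq, ENNReal.ofReal_eq_zero, not_le]; linarith
            exact (integrable_smul_measure hc0 ENNReal.ofReal_ne_top).mp hI
          have hEU : ∀ i, ∫ ω, l (f k (XU k i ω)) ∂μΩ = ∫ x, l (f k x) ∂(μbar0 k) :=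
            fun i => integral_comp_law (hlawU k i) intB0.1
          have hmain : πbar k * (∫ x, l (f k x) ∂(μN k))
                + (1 - πbar k) * (∫ x, l (f k x) ∂(μbar0 k))
              = π k * (∫ x, l (f k x) ∂(μP k)) + (1 - π k) * (∫ x, l (f k x) ∂(μN k)) := by
            have h1 : ∫ x, l (f k x)
                  ∂((ENNReal.ofReal (πbar k)) • μN k + (ENNReal.ofReal (1 - πbar k)) • μbar0 k)
                = ∫ x, l (f k x)
                  ∂((ENNReal.ofReal (π k)) • μP k + (ENNReal.ofReal (1 - π k)) • μN k) := by
              rw [hmixk]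
            rw [integral_add_measure (intN.smul_measure ENNReal.ofReal_ne_top)
                (intB0.smul_measure ENNReal.ofReal_ne_top),
              integral_add_measure ((hint k k).smul_measure ENNReal.ofReal_ne_top)
                (intN.smul_measure ENNReal.ofReal_ne_top),
              integral_smul_measure, integral_smul_measure, integral_smul_measure,
              integral_smul_measure,
              ENNReal.toReal_ofReal (hπbar k), ENNReal.toReal_ofReal (by linarith),
              ENNReal.toReal_ofReal (hπ k), ENNReal.toReal_ofReal (by linarith [hπ1 k]),
              smul_eq_mul, smul_eq_mul, smul_eq_mul, smul_eq_mul] at h1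
            exact h1
          exact ⟨(πbar k + π k - 1) * ∫ x, l (f k x) ∂(μN k),
            (1 - πbar k) * ∫ x, l (f k x) ∂(μbar0 k),
            fun i => by rw [hEN i], fun i => by rw [hEU i], by linear_combination hmain⟩
    -- assemble
    have hnN0 : (nN k : ℝ) ≠ 0 := Nat.cast_ne_zero.mpr (hnN k).ne'
    have hnU0 : (nU k : ℝ) ≠ 0 := Nat.cast_ne_zero.mpr (hnU k).ne'
    have h1 : ∑ i, ((1 - π k) * (∫ ω, l (-(f k (XN k i ω))) ∂μΩ)
          + (πbar k + π k - 1) * (∫ ω, l (f k (XN k i ω)) ∂μΩ))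
        = (nN k : ℝ) * ((∑ j ∈ Finset.univ.erase k, π j * ∫ x, l (-(f k x)) ∂(μP j)) + CN) := by
      rw [Finset.sum_congr rfl (fun i _ => by rw [claimA i, hN i]),
        Finset.sum_const, Finset.card_univ, Fintype.card_fin, nsmul_eq_mul]
    have h2 : (1 - πbar k) * ∑ i, ∫ ω, l (f k (XU k i ω)) ∂μΩ = (nU k : ℝ) * CU := by
      rw [Finset.mul_sum, Finset.sum_congr rfl (fun i _ => hU i),
        Finset.sum_const, Finset.card_univ, Fintype.card_fin, nsmul_eq_mul]
    rw [h1]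
    have h3 : ((1 - πbar k) / (nU k : ℝ)) * (∑ i, ∫ ω, l (f k (XU k i ω)) ∂μΩ) = CU := by
      rw [div_mul_eq_mul_div, h2]
      field_simp
    rw [h3]
    have h4 : (1 / (nN k : ℝ)) * ((nN k : ℝ)
        * ((∑ j ∈ Finset.univ.erase k, π j * ∫ x, l (-(f k x)) ∂(μP j)) + CN))
        = (∑ j ∈ Finset.univ.erase k, π j * ∫ x, l (-(f k x)) ∂(μP j)) + CN := by
      field_simp
    rw [h4]
    linarith [hCNCU]
  -- outer assembly
  have hEachN : ∀ (k : Fin q) (i : Fin (nN k)), Integrable (fun ω =>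
      (1 - π k) * l (-(f k (XN k i ω))) + (πbar k + π k - 1) * l (f k (XN k i ω))) μΩ :=
    fun k i => ((hintΩN' k i).const_mul _).add ((hintΩN k i).const_mul _)
  have hIN : ∀ k : Fin q, Integrable (fun ω => ∑ i, ((1 - π k) * l (-(f k (XN k i ω)))
      + (πbar k + π k - 1) * l (f k (XN k i ω)))) μΩ :=
    fun k => integrable_finset_sum _ (fun i _ => hEachN k i)
  have hIU : ∀ k : Fin q, Integrable (fun ω => ∑ i, l (f k (XU k i ω))) μΩ :=
    fun k => integrable_finset_sum _ (fun i _ => hintΩU k i)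
  have hF : ∀ k : Fin q, Integrable (fun ω => (1 / (nN k : ℝ)) * ∑ i,
      ((1 - π k) * l (-(f k (XN k i ω))) + (πbar k + π k - 1) * l (f k (XN k i ω)))) μΩ :=
    fun k => (hIN k).const_mul _
  have hG : ∀ k : Fin q, Integrable (fun ω =>
      ((1 - πbar k) / (nU k : ℝ)) * ∑ i, l (f k (XU k i ω))) μΩ :=
    fun k => (hIU k).const_mul _
  have hIterm : ∀ k : Fin q, Integrable (fun ω =>
      (1 / (nN k : ℝ)) * ∑ i, ((1 - π k) * l (-(f k (XN k i ω)))
          + (πbar k + π k - 1) * l (f k (XN k i ω)))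
        + ((1 - πbar k) / (nU k : ℝ)) * ∑ i, l (f k (XU k i ω))) μΩ :=
    fun k => (hF k).add (hG k)
  rw [integral_finset_sum Finset.univ (fun k _ => hIterm k)]
  have hL : ∀ k : Fin q, ∫ ω, ((1 / (nN k : ℝ)) * ∑ i, ((1 - π k) * l (-(f k (XN k i ω)))
          + (πbar k + π k - 1) * l (f k (XN k i ω)))
        + ((1 - πbar k) / (nU k : ℝ)) * ∑ i, l (f k (XU k i ω))) ∂μΩ
      = (π k * ∫ x, l (f k x) ∂(μP k))
        + ∑ j ∈ Finset.univ.erase k, π j * ∫ x, l (-(f k x)) ∂(μP j) := by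
    intro k
    have hinner : ∀ i, ∫ ω, ((1 - π k) * l (-(f k (XN k i ω)))
          + (πbar k + π k - 1) * l (f k (XN k i ω))) ∂μΩ
        = (1 - π k) * (∫ ω, l (-(f k (XN k i ω))) ∂μΩ)
          + (πbar k + π k - 1) * (∫ ω, l (f k (XN k i ω)) ∂μΩ) := by
      intro i
      have hA : Integrable (fun ω => (1 - π k) * l (-(f k (XN k i ω)))) μΩ :=
        (hintΩN' k i).const_mul _
      have hB : Integrable (fun ω => (πbar k + π k - 1) * l (f k (XN k i ω))) μΩ :=
        (hintΩN k i).const_mul _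
      rw [integral_add hA hB, integral_const_mul, integral_const_mul]
    calc ∫ ω, ((1 / (nN k : ℝ)) * ∑ i, ((1 - π k) * l (-(f k (XN k i ω)))
            + (πbar k + π k - 1) * l (f k (XN k i ω)))
          + ((1 - πbar k) / (nU k : ℝ)) * ∑ i, l (f k (XU k i ω))) ∂μΩ
        = (∫ ω, (1 / (nN k : ℝ)) * ∑ i, ((1 - π k) * l (-(f k (XN k i ω)))
              + (πbar k + π k - 1) * l (f k (XN k i ω))) ∂μΩ)
          + ∫ ω, ((1 - πbar k) / (nU k : ℝ)) * ∑ i, l (f k (XU k i ω)) ∂μΩ :=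
          integral_add (hF k) (hG k)
      _ = (1 / (nN k : ℝ)) * (∫ ω, ∑ i, ((1 - π k) * l (-(f k (XN k i ω)))
              + (πbar k + π k - 1) * l (f k (XN k i ω))) ∂μΩ)
          + ((1 - πbar k) / (nU k : ℝ)) * ∫ ω, ∑ i, l (f k (XU k i ω)) ∂μΩ := by
          rw [integral_const_mul, integral_const_mul]
      _ = (1 / (nN k : ℝ)) * (∑ i, ∫ ω, ((1 - π k) * l (-(f k (XN k i ω)))
              + (πbar k + π k - 1) * l (f k (XN k i ω))) ∂μΩ)
          + ((1 - πbar k) / (nU k : ℝ)) * ∑ i, ∫ ω, l (f k (XU k i ω)) ∂μΩ := by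
          rw [integral_finset_sum _ (fun i _ => hEachN k i),
            integral_finset_sum _ (fun i _ => hintΩU k i)]
      _ = (π k * ∫ x, l (f k x) ∂(μP k))
          + ∑ j ∈ Finset.univ.erase k, π j * ∫ x, l (-(f k x)) ∂(μP j) := by
          simp only [hinner]
          exact key k
  rw [Finset.sum_congr rfl (fun k _ => hL k)]
  have hR : ∀ k : Fin q, π k * ∫ x, (l (f k x)
        + ∑ j ∈ Finset.univ.erase k, l (-(f j x))) ∂(μP k)
      = π k * (∫ x, l (f k x) ∂(μP k))
        + ∑ j ∈ Finset.univ.erase k, π k * ∫ x, l (-(f j x)) ∂(μP k) := by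
    intro k
    have hS : Integrable (fun x => ∑ j ∈ Finset.univ.erase k, l (-(f j x))) (μP k) :=
      integrable_finset_sum _ (fun j _ => hint' j k)
    have e1 : ∫ x, (l (f k x) + ∑ j ∈ Finset.univ.erase k, l (-(f j x))) ∂(μP k)
        = (∫ x, l (f k x) ∂(μP k))
          + ∫ x, ∑ j ∈ Finset.univ.erase k, l (-(f j x)) ∂(μP k) :=
      integral_add (hint k k) hS
    rw [e1, integral_finset_sum _ (fun j _ => hint' j k), mul_add, Finset.mul_sum]
  rw [Finset.sum_congr rfl (fun k _ => hR k), Finset.sum_add_distrib, Finset.sum_add_distrib]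
  congr 1
  exact erase_swap (fun a b => π b * ∫ x, l (-(f a x)) ∂(μP b))
end

section
/- Let g : ℝ → ℝ be a nonnegative risk correction function with g(z) ≥ z for all z (e.g., g(z) = |z|), Lipschitz with constant L_g. Define the corrected estimator R̃_k(f_k) = g(R̂ᴾ_k(f_k)) + ((1−π_k)/n_k^N) Σ_i ℓ(−f_k(x_{k,i}^N)) and R̃ = Σ_k R̃_k. Then the bias satisfies 0 ≤ E[R̃(f_1,...,f_q)] − R(f_1,...,f_q) ≤ Σ_{k=1}^q (2−2π̄_k−π_k)(L_g+1) C_ℓ Δ_k, where Δ_k = exp( −2β² / ( (1−π_k−π̄_k)²C_ℓ²/n_k^N + (1−π̄_k)²C_ℓ²/n_k^U ) ). -/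
open MeasureTheory

section Aux
open Real ProbabilityTheory

open Real ProbabilityTheory


lemma key_ineq (p h : ℝ) (hp0 : 0 ≤ p) (hp1 : p ≤ 1) :
    1 - p + p * exp h ≤ exp (p * h + h ^ 2 / 8) := by
  set u : ℝ → ℝ := fun x => 1 - p + p * exp x with hu_def
  have hu : ∀ x, 0 < u x := by
    intro x
    rcases eq_or_lt_of_le hp0 with h0 | h0
    · simp [hu_def, ← h0]
    · have := exp_pos x
      have : 0 < p * exp x := mul_pos h0 this
      simp only [hu_def]; linarith
  set F : ℝ → ℝ := fun x => p * x + x ^ 2 / 8 - log (u x) with hF_def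
  set F' : ℝ → ℝ := fun x => p + x / 4 - p * exp x / u x with hF'_def
  set F'' : ℝ → ℝ := fun x =>
    1 / 4 - (p * exp x * u x - p * exp x * (p * exp x)) / (u x) ^ 2 with hF''_def
  have hderu : ∀ x, HasDerivAt u (p * exp x) x := by
    intro x
    simpa [hu_def] using ((Real.hasDerivAt_exp x).const_mul p).const_add (1 - p)
  have hder1 : ∀ x, HasDerivAt F (F' x) x := by
    intro x
    have h1 : HasDerivAt (fun y : ℝ => p * y + y ^ 2 / 8) (p + 2 * x / 8) x := by
      simpa using ((hasDerivAt_id x).const_mul p).fun_add ((hasDerivAt_pow 2 x).div_const 8)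
    have h2 : HasDerivAt (fun y => log (u y)) (p * exp x / u x) x :=
      (hderu x).log (hu x).ne'
    have := h1.fun_sub h2
    refine this.congr_deriv ?_
    simp only [hF'_def]; ring
  have hder2 : ∀ x, HasDerivAt F' (F'' x) x := by
    intro x
    have h1 : HasDerivAt (fun y : ℝ => p + y / 4) (1 / 4) x := by
      simpa using ((hasDerivAt_id x).div_const 4).const_add p
    have h2 : HasDerivAt (fun y => p * exp y / u y)
        ((p * exp x * u x - p * exp x * (p * exp x)) / (u x) ^ 2) x :=
      ((Real.hasDerivAt_exp x).const_mul p).div (hderu x) (hu x).ne'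
    simpa only [hF''_def] using h1.fun_sub h2
  have hF''nonneg : ∀ x, 0 ≤ F'' x := by
    intro x
    have hx := hu x
    have hv : 0 ≤ p * exp x := mul_nonneg hp0 (exp_pos x).le
    have habs : ∀ U V : ℝ, 0 < U → V * U - V * V ≤ 1 / 4 * U ^ 2 := by
      intro U V hU; nlinarith [sq_nonneg (U - 2 * V)]
    have hkey : (p * exp x * u x - p * exp x * (p * exp x)) / (u x) ^ 2 ≤ 1 / 4 := by
      rw [div_le_iff₀ (by positivity)]
      exact habs (u x) (p * exp x) hx
    simp only [hF''_def]; linarith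
  have hF'mono : Monotone F' :=
    monotone_of_deriv_nonneg (fun x => (hder2 x).differentiableAt)
      (fun x => by rw [(hder2 x).deriv]; exact hF''nonneg x)
  have hu0 : u 0 = 1 := by simp [hu_def]
  have hF'0 : F' 0 = 0 := by simp [hF'_def, hu0]
  have hF0 : F 0 = 0 := by simp [hF_def, hu0]
  have hFnonneg : ∀ x, 0 ≤ F x := by
    intro x
    rcases le_or_gt 0 x with hx | hx
    · have hmono : MonotoneOn F (Set.Ici 0) :=
        monotoneOn_of_deriv_nonneg (convex_Ici 0)
          (fun y _ => (hder1 y).continuousAt.continuousWithinAt)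
          (fun y _ => (hder1 y).differentiableAt.differentiableWithinAt)
          (fun y hy => by
            rw [(hder1 y).deriv]
            have : (0:ℝ) ≤ y := le_of_lt (by simpa using hy)
            calc (0:ℝ) = F' 0 := hF'0.symm
              _ ≤ F' y := hF'mono this)
      have := hmono (Set.self_mem_Ici) (Set.mem_Ici.mpr hx) hx
      rwa [hF0] at this
    · have hmono : AntitoneOn F (Set.Iic 0) :=
        antitoneOn_of_deriv_nonpos (convex_Iic 0)
          (fun y _ => (hder1 y).continuousAt.continuousWithinAt)
          (fun y _ => (hder1 y).differentiableAt.differentiableWithinAt)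
          (fun y hy => by
            rw [(hder1 y).deriv]
            have : y ≤ (0:ℝ) := le_of_lt (by simpa using hy)
            calc F' y ≤ F' 0 := hF'mono this
              _ = 0 := hF'0)
      have := hmono (Set.mem_Iic.mpr hx.le) (Set.self_mem_Iic) hx.le
      rwa [hF0] at this
  have hlog : log (u h) ≤ p * h + h ^ 2 / 8 := by
    have := hFnonneg h
    simp only [hF_def] at this; linarith
  calc 1 - p + p * exp h = exp (log (u h)) := (exp_log (hu h)).symm
    _ ≤ exp (p * h + h ^ 2 / 8) := exp_le_exp.mpr hlog

lemma hoeffding_lemma {Ω : Type*} [MeasurableSpace Ω] (μ : Measure Ω)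
    [IsProbabilityMeasure μ] (Y : Ω → ℝ) (hm : Measurable Y) (a b : ℝ)
    (ha : ∀ ω, a ≤ Y ω) (hb : ∀ ω, Y ω ≤ b) (hE : ∫ ω, Y ω ∂μ = 0) (t : ℝ) :
    mgf Y μ t ≤ exp (t ^ 2 * (b - a) ^ 2 / 8) := by
  have hint : Integrable Y μ := by
    refine Integrable.mono' (integrable_const (max |a| |b|)) hm.aestronglyMeasurable ?_
    filter_upwards with ω
    rw [Real.norm_eq_abs, abs_le]
    refine ⟨?_, (hb ω).trans ((le_abs_self b).trans (le_max_right _ _))⟩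
    calc -(max |a| |b|) ≤ -|a| := by simp
      _ ≤ a := neg_abs_le a
      _ ≤ Y ω := ha ω
  have ha0 : a ≤ 0 := by
    have := integral_mono (integrable_const a) hint (fun ω => ha ω)
    simpa [hE] using this
  have hb0 : 0 ≤ b := by
    have := integral_mono hint (integrable_const b) (fun ω => hb ω)
    simpa [hE] using this
  rcases eq_or_lt_of_le (ha0.trans hb0) with heq | hab
  · -- a = 0 = b, so Y ≡ 0
    have ha' : a = 0 := by linarith [heq ▸ ha0]
    have hb' : b = 0 := heq ▸ ha'
    have hY : ∀ ω, Y ω = 0 := fun ω =>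
      le_antisymm (hb' ▸ hb ω) (ha' ▸ ha ω)
    have : mgf Y μ t = 1 := by
      simp only [mgf]
      rw [integral_congr_ae (Filter.Eventually.of_forall fun ω => by
        rw [hY ω, mul_zero, exp_zero])]
      simp
    rw [this]
    exact one_le_exp (by positivity)
  · set p : ℝ := -a / (b - a) with hp_def
    have hba : (0:ℝ) < b - a := by linarith
    have hp0 : 0 ≤ p := div_nonneg (by linarith) hba.le
    have hp1 : p ≤ 1 := by
      rw [hp_def, div_le_one hba]; linarith
    set c : ℝ := (b * exp (t * a) - a * exp (t * b)) / (b - a) with hc_def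
    set d : ℝ := (exp (t * b) - exp (t * a)) / (b - a) with hd_def
    -- pointwise convexity bound
    have hpt : ∀ ω, exp (t * Y ω) ≤ c + d * Y ω := by
      intro ω
      have h1 : (b - Y ω) / (b - a) ≥ 0 := div_nonneg (by linarith [hb ω]) hba.le
      have h2 : (Y ω - a) / (b - a) ≥ 0 := div_nonneg (by linarith [ha ω]) hba.le
      have h3 : (b - Y ω) / (b - a) + (Y ω - a) / (b - a) = 1 := by
        field_simp
        ring
      have hconv := convexOn_exp.2 (Set.mem_univ (t * a)) (Set.mem_univ (t * b))
        h1 h2 h3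
      simp only [smul_eq_mul] at hconv
      have heq : (b - Y ω) / (b - a) * (t * a) + (Y ω - a) / (b - a) * (t * b)
          = t * Y ω := by
        field_simp; ring
      rw [heq] at hconv
      calc exp (t * Y ω)
          ≤ (b - Y ω) / (b - a) * exp (t * a) + (Y ω - a) / (b - a) * exp (t * b) :=
            hconv
        _ = c + d * Y ω := by rw [hc_def, hd_def]; field_simp; ring
    have hintexp : Integrable (fun ω => exp (t * Y ω)) μ := by
      refine Integrable.mono' (integrable_const (exp (max (t * a) (t * b))))
        ((hm.const_mul t).exp).aestronglyMeasurable ?_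
      filter_upwards with ω
      rw [Real.norm_eq_abs, abs_of_pos (exp_pos _), exp_le_exp]
      rcases le_or_gt 0 t with ht | ht
      · exact le_max_of_le_right (mul_le_mul_of_nonneg_left (hb ω) ht)
      · exact le_max_of_le_left (by nlinarith [ha ω])
    have hmgf : mgf Y μ t ≤ c := by
      have := integral_mono hintexp ((integrable_const c).add (hint.const_mul d))
        (fun ω => hpt ω)
      simpa [mgf, integral_add (integrable_const c) (hint.const_mul d),
        integral_const_mul, hE] using this
    refine hmgf.trans ?_
    -- rewrite c and apply key_ineq
    have hc_eq : c = exp (t * a) * (1 - p + p * exp (t * (b - a))) := by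
      rw [hc_def, hp_def]
      rw [show t * b = t * a + t * (b - a) by ring, exp_add]
      field_simp
      ring
    have hkey := key_ineq p (t * (b - a)) hp0 hp1
    calc c ≤ exp (t * a) * exp (p * (t * (b - a)) + (t * (b - a)) ^ 2 / 8) := by
          rw [hc_eq]
          exact mul_le_mul_of_nonneg_left hkey (exp_pos _).le
      _ = exp (t * a + p * (t * (b - a)) + (t * (b - a)) ^ 2 / 8) := by
          rw [← exp_add]; ring_nf
      _ = exp (t ^ 2 * (b - a) ^ 2 / 8) := by
          congr 1
          rw [hp_def]
          field_simp
          ring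

lemma iIndepFun_precomp {Ω ι ι' X : Type*} [MeasurableSpace Ω] [MeasurableSpace X]
    [Nonempty ι'] {μ : Measure Ω} {f : ι → Ω → X}
    (h : iIndepFun f μ) (u : ι' → ι)
    (hu : Function.Injective u) :
    iIndepFun (fun j => f (u j)) μ := by
  classical
  rw [iIndepFun_iff_measure_inter_preimage_eq_mul] at h ⊢
  intro S sets hsets
  set v := Function.invFun u with hv_def
  have hvu : ∀ j, v (u j) = j := fun j => Function.leftInverse_invFun hu j
  have key := h (S.image u) (sets := fun i => sets (v i)) ?_
  · have h1 : (⋂ i ∈ S.image u, f i ⁻¹' sets (v i)) = ⋂ j ∈ S, f (u j) ⁻¹' sets j := by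
      rw [Finset.set_biInter_finset_image]
      exact Set.iInter₂_congr fun j _ => by rw [hvu j]
    have h2 : (∏ i ∈ S.image u, μ (f i ⁻¹' sets (v i)))
        = ∏ j ∈ S, μ (f (u j) ⁻¹' sets j) := by
      rw [Finset.prod_image (fun j _ j' _ hjj' => hu hjj')]
      exact Finset.prod_congr rfl fun j _ => by rw [hvu j]
    rw [h1, h2] at key
    exact key
  · intro i hi
    obtain ⟨j, hj, rfl⟩ := Finset.mem_image.mp hi
    simpa [hvu j] using hsets j hj

lemma hoeffding_ineq {Ω ι : Type*} [MeasurableSpace Ω] [Fintype ι]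
    (μ : Measure Ω) [IsProbabilityMeasure μ]
    (Y : ι → Ω → ℝ) (hm : ∀ i, Measurable (Y i))
    (hind : iIndepFun Y μ)
    (a b : ι → ℝ) (ha : ∀ i ω, a i ≤ Y i ω) (hb : ∀ i ω, Y i ω ≤ b i)
    (β : ℝ) (hβ : 0 ≤ β) (hEβ : β ≤ ∑ i, ∫ ω, Y i ω ∂μ) :
    (μ {ω | ∑ i, Y i ω < 0}).toReal
      ≤ exp (-2 * β ^ 2 / ∑ i, (b i - a i) ^ 2) := by
  classical
  have hprob : (μ {ω | ∑ i, Y i ω < 0}).toReal ≤ 1 := by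
    calc (μ {ω | ∑ i, Y i ω < 0}).toReal ≤ (μ Set.univ).toReal := by
          gcongr
          exacts [measure_ne_top _ _, Set.subset_univ _]
      _ = 1 := by simp
  set V : ℝ := ∑ i, (b i - a i) ^ 2 with hV_def
  have hV0 : 0 ≤ V := Finset.sum_nonneg fun i _ => sq_nonneg _
  rcases eq_or_lt_of_le hV0 with hV | hV
  · rw [← hV]; simpa using hprob
  rcases eq_or_lt_of_le hβ with hβ0 | hβ0
  · rw [← hβ0]; simpa using hprob
  -- main case
  have hintY : ∀ i, Integrable (Y i) μ := by
    intro i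
    refine Integrable.mono' (integrable_const (max |a i| |b i|))
      (hm i).aestronglyMeasurable ?_
    filter_upwards with ω
    rw [Real.norm_eq_abs, abs_le]
    refine ⟨?_, (hb i ω).trans ((le_abs_self _).trans (le_max_right _ _))⟩
    calc -(max |a i| |b i|) ≤ -|a i| := by simp
      _ ≤ a i := neg_abs_le _
      _ ≤ Y i ω := ha i ω
  set E : ι → ℝ := fun i => ∫ ω, Y i ω ∂μ with hE_def
  set Z : ι → Ω → ℝ := fun i ω => Y i ω - E i with hZ_def
  have hmZ : ∀ i, Measurable (Z i) := fun i => (hm i).sub_const (E i)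
  have hindZ : iIndepFun Z μ :=
    hind.comp (fun i x => x - E i) (fun i => measurable_id.sub_const (E i))
  have hEZ : ∀ i, ∫ ω, Z i ω ∂μ = 0 := by
    intro i
    rw [hZ_def]
    simp only
    rw [integral_sub (hintY i) (integrable_const (E i)), integral_const]
    simp [hE_def]
  set t : ℝ := -4 * β / V with ht_def
  have ht : t ≤ 0 := by
    rw [ht_def]
    exact div_nonpos_of_nonpos_of_nonneg (by linarith) hV0
  have hintexpZ : ∀ i, Integrable (fun ω => exp (t * Z i ω)) μ := by
    intro i
    refine Integrable.mono' (integrable_const (exp (max (t * (a i - E i)) (t * (b i - E i)))))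
      (((hmZ i).const_mul t).exp).aestronglyMeasurable ?_
    filter_upwards with ω
    rw [Real.norm_eq_abs, abs_of_pos (exp_pos _), exp_le_exp]
    rcases le_or_gt 0 t with h0 | h0
    · refine le_max_of_le_right (mul_le_mul_of_nonneg_left ?_ h0)
      simp only [hZ_def]; linarith [hb i ω]
    · refine le_max_of_le_left ?_
      have : a i - E i ≤ Z i ω := by simp only [hZ_def]; linarith [ha i ω]
      nlinarith
  have hintexpS : Integrable (fun ω => exp (t * (∑ i, Z i) ω)) μ :=
    hindZ.integrable_exp_mul_sum hmZ (fun i _ => hintexpZ i)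
  have hsub : {ω | ∑ i, Y i ω < 0} ⊆ {ω | (∑ i, Z i) ω ≤ -β} := by
    intro ω hω
    simp only [Set.mem_setOf_eq] at hω ⊢
    have h1 : (∑ i, Z i) ω = ∑ i, Y i ω - ∑ i, E i := by
      simp [hZ_def, Finset.sum_apply, Finset.sum_sub_distrib]
    rw [h1]
    have : β ≤ ∑ i, E i := hEβ
    linarith
  have hchern := measure_le_le_exp_mul_mgf (X := ∑ i, Z i) (μ := μ) (-β) ht hintexpS
  have hmgfS : mgf (∑ i, Z i) μ t = ∏ i, mgf (Z i) μ t :=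
    hindZ.mgf_sum hmZ Finset.univ
  have hmgfZ : ∀ i, mgf (Z i) μ t ≤ exp (t ^ 2 * (b i - a i) ^ 2 / 8) := by
    intro i
    have := hoeffding_lemma μ (Z i) (hmZ i) (a i - E i) (b i - E i)
      (fun ω => by simp only [hZ_def]; linarith [ha i ω])
      (fun ω => by simp only [hZ_def]; linarith [hb i ω]) (hEZ i) t
    simpa using this
  have hprod : (∏ i, mgf (Z i) μ t) ≤ exp (t ^ 2 * V / 8) := by
    calc (∏ i, mgf (Z i) μ t) ≤ ∏ i, exp (t ^ 2 * (b i - a i) ^ 2 / 8) :=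
          Finset.prod_le_prod (fun i _ => mgf_nonneg) (fun i _ => hmgfZ i)
      _ = exp (∑ i, t ^ 2 * (b i - a i) ^ 2 / 8) := (Real.exp_sum _ _).symm
      _ = exp (t ^ 2 * V / 8) := by
          congr 1
          rw [hV_def, Finset.mul_sum, Finset.sum_div]
  calc (μ {ω | ∑ i, Y i ω < 0}).toReal
      ≤ (μ {ω | (∑ i, Z i) ω ≤ -β}).toReal :=
        ENNReal.toReal_mono (measure_ne_top _ _) (measure_mono hsub)
    _ ≤ exp (-t * -β) * mgf (∑ i, Z i) μ t := hchern
    _ ≤ exp (-t * -β) * exp (t ^ 2 * V / 8) := by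
        rw [hmgfS]
        exact mul_le_mul_of_nonneg_left hprod (exp_pos _).le
    _ = exp (t * β + t ^ 2 * V / 8) := by rw [← exp_add]; congr 1; ring
    _ = exp (-2 * β ^ 2 / V) := by
        congr 1
        rw [ht_def]
        field_simp
        ring

lemma integrable_of_bddI {Ω : Type*} [MeasurableSpace Ω] {μ : Measure Ω}
    [IsFiniteMeasure μ] {Y : Ω → ℝ} (hm : Measurable Y) {a b : ℝ}
    (ha : ∀ ω, a ≤ Y ω) (hb : ∀ ω, Y ω ≤ b) : Integrable Y μ := by
  refine Integrable.mono' (integrable_const (max |a| |b|)) hm.aestronglyMeasurable ?_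
  filter_upwards with ω
  rw [Real.norm_eq_abs, abs_le]
  refine ⟨?_, (hb ω).trans ((le_abs_self b).trans (le_max_right _ _))⟩
  calc -(max |a| |b|) ≤ -|a| := by simp
    _ ≤ a := neg_abs_le a
    _ ≤ Y ω := ha ω

lemma per_term {Ω : Type*} [MeasurableSpace Ω] (μ : Measure Ω) [IsProbabilityMeasure μ]
    (P : Ω → ℝ) (g : ℝ → ℝ) (Lg M β Δ : ℝ)
    (hmP : Measurable P)
    (hintP : Integrable P μ) (hintg : Integrable (fun ω => g (P ω)) μ)
    (hg0 : ∀ z, 0 ≤ g z) (hgid : ∀ z, 0 ≤ z → g z = z)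
    (hLip : ∀ z, |g z| ≤ Lg * |z|)
    (hM : 0 ≤ M) (hPbound : ∀ ω, |P ω| ≤ M)
    (hLg0 : 0 ≤ Lg)
    (hΔ : (μ {ω | P ω < 0}).toReal ≤ Δ) :
    ∫ ω, (g (P ω) - P ω) ∂μ ≤ (Lg + 1) * M * Δ := by
  have hs : MeasurableSet {ω | P ω < 0} := measurableSet_lt hmP measurable_const
  have hpt : ∀ ω, g (P ω) - P ω
      ≤ Set.indicator {ω | P ω < 0} (fun _ => (Lg + 1) * M) ω := by
    intro ω
    by_cases h : P ω < 0
    · rw [Set.indicator_of_mem (show ω ∈ {ω | P ω < 0} from h)]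
      have h1 : |g (P ω)| ≤ Lg * |P ω| := hLip _
      have h2 : |P ω| ≤ M := hPbound ω
      have h3 : g (P ω) ≤ Lg * M := by
        calc g (P ω) ≤ |g (P ω)| := le_abs_self _
          _ ≤ Lg * |P ω| := h1
          _ ≤ Lg * M := mul_le_mul_of_nonneg_left h2 hLg0
      have h4 : -P ω ≤ M := by
        rw [abs_of_neg h] at h2; linarith
      linarith
    · rw [Set.indicator_of_notMem (show ω ∉ {ω | P ω < 0} from h), hgid _ (not_lt.mp h)]
      simp
  calc ∫ ω, (g (P ω) - P ω) ∂μ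
      ≤ ∫ ω, Set.indicator {ω | P ω < 0} (fun _ => (Lg + 1) * M) ω ∂μ :=
        integral_mono (hintg.sub hintP) ((integrable_const _).indicator hs) hpt
    _ = (μ {ω | P ω < 0}).toReal • ((Lg + 1) * M) := integral_indicator_const _ hs
    _ = (Lg + 1) * M * (μ {ω | P ω < 0}).toReal := by rw [smul_eq_mul]; ring
    _ ≤ (Lg + 1) * M * Δ := mul_le_mul_of_nonneg_left hΔ (by positivity)

end Aux

/-- The partial empirical risk R̂ᴾ_k(f_k) built from the negative samples `xN` and
unlabeled samples `xU`. -/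
noncomputable def partialRisk {X : Type*} (π πbar : ℝ) (l : ℝ → ℝ) (f : X → ℝ)
    {nN nU : ℕ} (xN : Fin nN → X) (xU : Fin nU → X) : ℝ :=
  (πbar + π - 1) / (nN : ℝ) * ∑ i, l (f (xN i))
    + (1 - πbar) / (nU : ℝ) * ∑ i, l (f (xU i))

/-- The remaining (nonnegative) part of the per-class empirical risk. -/
noncomputable def negPartRisk {X : Type*} (π : ℝ) (l : ℝ → ℝ) (f : X → ℝ)
    {nN : ℕ} (xN : Fin nN → X) : ℝ :=
  (1 - π) / (nN : ℝ) * ∑ i, l (-(f (xN i)))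

/-- the bias of the corrected risk estimator
R̃ = Σ_k [g(R̂ᴾ_k(f_k)) + ((1−π_k)/n_k^N) Σ_i ℓ(−f_k(x_{k,i}^N))] satisfies
0 ≤ E[R̃] − R ≤ Σ_k (2−2π̄_k−π_k)(L_g+1) C_ℓ Δ_k, where R = E[R̂]. -/
theorem corrected_risk_bias_bound
    {X Ω : Type*} [MeasurableSpace X] [MeasurableSpace Ω] {q : ℕ}
    (μΩ : Measure Ω) [IsProbabilityMeasure μΩ]
    (π πbar : Fin q → ℝ) (l g : ℝ → ℝ) (f : Fin q → X → ℝ)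
    (β Cl Lg : ℝ)
    (nN nU : Fin q → ℕ) (hnN : ∀ k, 0 < nN k) (hnU : ∀ k, 0 < nU k)
    (XN : ∀ k, Fin (nN k) → Ω → X) (XU : ∀ k, Fin (nU k) → Ω → X)
    (hmN : ∀ k i, Measurable (XN k i)) (hmU : ∀ k i, Measurable (XU k i))
    (hml : Measurable l) (hmf : ∀ k, Measurable (f k))
    -- all samples are mutually independent
    (hindep : ProbabilityTheory.iIndepFun
      (fun (i : (k : Fin q) × (Fin (nN k) ⊕ Fin (nU k))) => Sum.elim (XN i.1) (XU i.1) i.2) μΩ)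
    -- ℓ takes values in [0, C_ℓ] on the relevant range
    (hl0 : ∀ z, 0 ≤ l z) (hCl : 0 < Cl)
    (hlC : ∀ k x, l (f k x) ≤ Cl) (hlC' : ∀ k x, l (-(f k x)) ≤ Cl)
    -- the correction function g: nonnegative, upper bounds the identity,
    -- equal to the identity on nonnegative reals, Lipschitz with constant L_g
    (hg0 : ∀ z, 0 ≤ g z) (hgz : ∀ z, z ≤ g z) (hgid : ∀ z, 0 ≤ z → g z = z)
    (hLg : LipschitzWith (Real.toNNReal Lg) g) (hLg0 : 0 ≤ Lg)
    (hβ : 0 ≤ β)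
    (hπ : ∀ k, 0 ≤ π k) (hπbar : ∀ k, 0 ≤ πbar k) (hππbar : ∀ k, π k + πbar k ≤ 1)
    -- E[R̂ᴾ_k(f_k)] ≥ β for every k
    (hexp : ∀ k, β ≤ ∫ ω, partialRisk (π k) (πbar k) l (f k) (fun i => XN k i ω)
        (fun i => XU k i ω) ∂μΩ)
    (hintP : ∀ k, Integrable (fun ω => partialRisk (π k) (πbar k) l (f k)
        (fun i => XN k i ω) (fun i => XU k i ω)) μΩ)
    (hintg : ∀ k, Integrable (fun ω => g (partialRisk (π k) (πbar k) l (f k)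
        (fun i => XN k i ω) (fun i => XU k i ω))) μΩ)
    (hintN : ∀ k, Integrable (fun ω => negPartRisk (π k) l (f k) (fun i => XN k i ω)) μΩ) :
    0 ≤ (∫ ω, ∑ k, (g (partialRisk (π k) (πbar k) l (f k) (fun i => XN k i ω)
            (fun i => XU k i ω))
          + negPartRisk (π k) l (f k) (fun i => XN k i ω)) ∂μΩ)
        - (∫ ω, ∑ k, (partialRisk (π k) (πbar k) l (f k) (fun i => XN k i ω)
            (fun i => XU k i ω)
          + negPartRisk (π k) l (f k) (fun i => XN k i ω)) ∂μΩ)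
    ∧ (∫ ω, ∑ k, (g (partialRisk (π k) (πbar k) l (f k) (fun i => XN k i ω)
            (fun i => XU k i ω))
          + negPartRisk (π k) l (f k) (fun i => XN k i ω)) ∂μΩ)
        - (∫ ω, ∑ k, (partialRisk (π k) (πbar k) l (f k) (fun i => XN k i ω)
            (fun i => XU k i ω)
          + negPartRisk (π k) l (f k) (fun i => XN k i ω)) ∂μΩ)
      ≤ ∑ k, (2 - 2 * πbar k - π k) * (Lg + 1) * Cl *
          Real.exp (-2 * β ^ 2 /
            ((1 - π k - πbar k) ^ 2 * Cl ^ 2 / (nN k : ℝ)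
              + (1 - πbar k) ^ 2 * Cl ^ 2 / (nU k : ℝ))) := by
    classical
  have hmP : ∀ k, Measurable (fun ω => partialRisk (π k) (πbar k) l (f k)
      (fun i => XN k i ω) (fun i => XU k i ω)) := by
    intro k
    unfold partialRisk
    exact ((Finset.measurable_sum Finset.univ fun i _ =>
        (hml.comp (hmf k)).comp (hmN k i)).const_mul _).add
      ((Finset.measurable_sum Finset.univ fun i _ =>
        (hml.comp (hmf k)).comp (hmU k i)).const_mul _)
  have hdiff : (∫ ω, ∑ k, (g (partialRisk (π k) (πbar k) l (f k) (fun i => XN k i ω)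
            (fun i => XU k i ω))
          + negPartRisk (π k) l (f k) (fun i => XN k i ω)) ∂μΩ)
        - (∫ ω, ∑ k, (partialRisk (π k) (πbar k) l (f k) (fun i => XN k i ω)
            (fun i => XU k i ω)
          + negPartRisk (π k) l (f k) (fun i => XN k i ω)) ∂μΩ)
      = ∑ k, ∫ ω, (g (partialRisk (π k) (πbar k) l (f k) (fun i => XN k i ω)
            (fun i => XU k i ω))
          - partialRisk (π k) (πbar k) l (f k) (fun i => XN k i ω)
            (fun i => XU k i ω)) ∂μΩ := by
    rw [show (∫ ω, ∑ k, (g (partialRisk (π k) (πbar k) l (f k) (fun i => XN k i ω)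
            (fun i => XU k i ω))
          + negPartRisk (π k) l (f k) (fun i => XN k i ω)) ∂μΩ)
        = ∑ k, ∫ ω, (g (partialRisk (π k) (πbar k) l (f k) (fun i => XN k i ω)
            (fun i => XU k i ω))
          + negPartRisk (π k) l (f k) (fun i => XN k i ω)) ∂μΩ from
        integral_finset_sum _ fun k _ => (hintg k).add (hintN k),
      show (∫ ω, ∑ k, (partialRisk (π k) (πbar k) l (f k) (fun i => XN k i ω)
            (fun i => XU k i ω)
          + negPartRisk (π k) l (f k) (fun i => XN k i ω)) ∂μΩ)
        = ∑ k, ∫ ω, (partialRisk (π k) (πbar k) l (f k) (fun i => XN k i ω)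
            (fun i => XU k i ω)
          + negPartRisk (π k) l (f k) (fun i => XN k i ω)) ∂μΩ from
        integral_finset_sum _ fun k _ => (hintP k).add (hintN k),
      ← Finset.sum_sub_distrib]
    refine Finset.sum_congr rfl fun k _ => ?_
    rw [integral_add (hintg k) (hintN k), integral_add (hintP k) (hintN k),
        integral_sub (hintg k) (hintP k)]
    ring
  rw [hdiff]
  constructor
  · exact Finset.sum_nonneg fun k _ => integral_nonneg fun ω => sub_nonneg.mpr (hgz _)
  refine Finset.sum_le_sum fun k _ => ?_
  -- per-class analysis
  have hnN' : ((nN k : ℝ)) ≠ 0 := Nat.cast_ne_zero.mpr (hnN k).ne'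
  have hnU' : ((nU k : ℝ)) ≠ 0 := Nat.cast_ne_zero.mpr (hnU k).ne'
  have hc1 : (πbar k + π k - 1) / (nN k : ℝ) ≤ 0 :=
    div_nonpos_of_nonpos_of_nonneg (by linarith [hππbar k]) (Nat.cast_nonneg _)
  have hc2 : 0 ≤ (1 - πbar k) / (nU k : ℝ) :=
    div_nonneg (by linarith [hπ k, hππbar k]) (Nat.cast_nonneg _)
  haveI : Nonempty (Fin (nN k) ⊕ Fin (nU k)) := ⟨Sum.inl ⟨0, hnN k⟩⟩
  set c : Fin (nN k) ⊕ Fin (nU k) → ℝ :=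
    Sum.elim (fun _ => (πbar k + π k - 1) / (nN k : ℝ))
      (fun _ => (1 - πbar k) / (nU k : ℝ)) with hc
  set Y : (Fin (nN k) ⊕ Fin (nU k)) → Ω → ℝ :=
    fun j ω => c j * l (f k (Sum.elim (XN k) (XU k) j ω)) with hY
  have hmY : ∀ j, Measurable (Y j) := by
    rintro (i | i)
    · exact (((hml.comp (hmf k)).comp (hmN k i)).const_mul _)
    · exact (((hml.comp (hmf k)).comp (hmU k i)).const_mul _)
  have hindW : ProbabilityTheory.iIndepFun
      (fun j => Sum.elim (XN k) (XU k) j) μΩ :=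
    iIndepFun_precomp hindep
      (fun j => (⟨k, j⟩ : (k' : Fin q) × (Fin (nN k') ⊕ Fin (nU k'))))
      (fun j j' h => by simpa using h)
  have hindY : ProbabilityTheory.iIndepFun
      Y μΩ :=
    hindW.comp (fun j x => c j * l (f k x))
      (fun j => ((hml.comp (hmf k)).const_mul (c j)))
  set a : Fin (nN k) ⊕ Fin (nU k) → ℝ :=
    Sum.elim (fun _ => (πbar k + π k - 1) / (nN k : ℝ) * Cl) (fun _ => 0) with hA
  set b : Fin (nN k) ⊕ Fin (nU k) → ℝ :=
    Sum.elim (fun _ => (0:ℝ)) (fun _ => (1 - πbar k) / (nU k : ℝ) * Cl) with hB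
  have ha : ∀ j ω, a j ≤ Y j ω := by
    rintro (i | i) ω
    · simpa [hY, hA, hc] using mul_le_mul_of_nonpos_left (hlC k (XN k i ω)) hc1
    · simpa [hY, hA, hc] using mul_nonneg hc2 (hl0 (f k (XU k i ω)))
  have hb : ∀ j ω, Y j ω ≤ b j := by
    rintro (i | i) ω
    · simpa [hY, hB, hc] using mul_nonpos_of_nonpos_of_nonneg hc1 (hl0 (f k (XN k i ω)))
    · simpa [hY, hB, hc] using mul_le_mul_of_nonneg_left (hlC k (XU k i ω)) hc2
  have hsum : ∀ ω, (∑ j, Y j ω) = partialRisk (π k) (πbar k) l (f k)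
      (fun i => XN k i ω) (fun i => XU k i ω) := by
    intro ω
    rw [Fintype.sum_sum_type]
    simp only [hY, hc, Sum.elim_inl, Sum.elim_inr]
    simp [partialRisk, Finset.mul_sum]
  have hintYj : ∀ j, Integrable (Y j) μΩ :=
    fun j => integrable_of_bddI (hmY j) (ha j) (hb j)
  have hEsum : β ≤ ∑ j, ∫ ω, Y j ω ∂μΩ := by
    refine le_trans (hexp k) ?_
    rw [← integral_finset_sum _ (fun j _ => hintYj j)]
    exact le_of_eq (integral_congr_ae (Filter.Eventually.of_forall
      fun ω => (hsum ω).symm))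
  have hhoef := hoeffding_ineq μΩ Y hmY hindY a b ha hb β hβ hEsum
  have hV : (∑ j, (b j - a j) ^ 2)
      = (1 - π k - πbar k) ^ 2 * Cl ^ 2 / (nN k : ℝ)
        + (1 - πbar k) ^ 2 * Cl ^ 2 / (nU k : ℝ) := by
    rw [Fintype.sum_sum_type]
    simp only [hA, hB, Sum.elim_inl, Sum.elim_inr, Finset.sum_const,
      Finset.card_univ, Fintype.card_fin, nsmul_eq_mul]
    field_simp
    ring
  have hprob : (μΩ {ω | partialRisk (π k) (πbar k) l (f k) (fun i => XN k i ω)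
        (fun i => XU k i ω) < 0}).toReal
      ≤ Real.exp (-2 * β ^ 2 /
          ((1 - π k - πbar k) ^ 2 * Cl ^ 2 / (nN k : ℝ)
            + (1 - πbar k) ^ 2 * Cl ^ 2 / (nU k : ℝ))) := by
    have hset : {ω | partialRisk (π k) (πbar k) l (f k) (fun i => XN k i ω)
        (fun i => XU k i ω) < 0} = {ω | (∑ j, Y j ω) < 0} := by
      ext ω; simp only [Set.mem_setOf_eq, ← hsum ω]
    rw [hset, ← hV]
    exact hhoef
  have hLip : ∀ z, |g z| ≤ Lg * |z| := by
    intro z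
    have h0 : g 0 = 0 := hgid 0 le_rfl
    have := hLg.dist_le_mul z 0
    simpa [Real.dist_eq, h0, Real.coe_toNNReal Lg hLg0] using this
  have hcoef : (0:ℝ) ≤ 2 - 2 * πbar k - π k := by
    linarith [hπ k, hπbar k, hππbar k]
  have hPbound : ∀ ω, |partialRisk (π k) (πbar k) l (f k) (fun i => XN k i ω)
      (fun i => XU k i ω)| ≤ (2 - 2 * πbar k - π k) * Cl := by
    intro ω
    have habsY : ∀ j, |Y j ω| ≤ Sum.elim
        (fun _ : Fin (nN k) => -((πbar k + π k - 1) / (nN k : ℝ)) * Cl)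
        (fun _ : Fin (nU k) => (1 - πbar k) / (nU k : ℝ) * Cl) j := by
      rintro (i | i)
      · simp only [hY, hc, Sum.elim_inl]
        rw [abs_mul, abs_of_nonpos hc1, abs_of_nonneg (hl0 _)]
        exact mul_le_mul_of_nonneg_left (hlC k _) (by linarith)
      · simp only [hY, hc, Sum.elim_inr]
        rw [abs_mul, abs_of_nonneg hc2, abs_of_nonneg (hl0 _)]
        exact mul_le_mul_of_nonneg_left (hlC k _) hc2
    rw [← hsum ω]
    calc |∑ j, Y j ω|
        ≤ ∑ j, |Y j ω| := Finset.abs_sum_le_sum_abs _ _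
      _ ≤ ∑ j, Sum.elim
          (fun _ : Fin (nN k) => -((πbar k + π k - 1) / (nN k : ℝ)) * Cl)
          (fun _ : Fin (nU k) => (1 - πbar k) / (nU k : ℝ) * Cl) j :=
        Finset.sum_le_sum fun j _ => habsY j
      _ = (2 - 2 * πbar k - π k) * Cl := by
        rw [Fintype.sum_sum_type]
        simp only [Sum.elim_inl, Sum.elim_inr, Finset.sum_const,
          Finset.card_univ, Fintype.card_fin, nsmul_eq_mul]
        field_simp
        ring
  calc ∫ ω, (g (partialRisk (π k) (πbar k) l (f k) (fun i => XN k i ω)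
          (fun i => XU k i ω))
        - partialRisk (π k) (πbar k) l (f k) (fun i => XN k i ω)
          (fun i => XU k i ω)) ∂μΩ
      ≤ (Lg + 1) * ((2 - 2 * πbar k - π k) * Cl) *
        Real.exp (-2 * β ^ 2 /
          ((1 - π k - πbar k) ^ 2 * Cl ^ 2 / (nN k : ℝ)
            + (1 - πbar k) ^ 2 * Cl ^ 2 / (nU k : ℝ))) :=
        per_term μΩ _ g Lg _ β _ (hmP k) (hintP k) (hintg k) hg0 hgid hLip
          (mul_nonneg hcoef hCl.le) hPbound hLg0 hprob
    _ = (2 - 2 * πbar k - π k) * (Lg + 1) * Cl *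
        Real.exp (-2 * β ^ 2 /
          ((1 - π k - πbar k) ^ 2 * Cl ^ 2 / (nN k : ℝ)
            + (1 - πbar k) ^ 2 * Cl ^ 2 / (nU k : ℝ))) := by ring
end

section
/- Under SCAR with π̄_k = c_k(1−π_k) and the identity p(x|ȳ_k=1) = p(x|y≠k), the total one-versus-rest risk can equivalently be written as R(f_1,...,f_q) = Σ_{k=1}^q [ E_{p(x)} ℓ(f_k(x)) − (1−π_k) E_{p(x|y≠k)} ℓ(f_k(x)) + (1−π_k) E_{p(x|y≠k)} ℓ(−f_k(x)) ]. -/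
open MeasureTheory

/-- under SCAR (π̄_k = c_k(1−π_k) and p(x|ȳ_k=1) = p(x|y≠k)), the total
one-versus-rest risk can be written as
R(f_1,...,f_q) = Σ_k [E_{p(x)} ℓ(f_k) − (1−π_k) E_{p(x|y≠k)} ℓ(f_k) + (1−π_k) E_{p(x|y≠k)} ℓ(−f_k)].
`μX` is the marginal p(x), `μP k` is p(x|y=k), `μN k` is p(x|y≠k), `μbar1 k` is p(x|ȳ_k=1). -/
theorem total_risk_rewrite
    {X : Type*} [MeasurableSpace X] {q : ℕ}
    (μX : Measure X) (μP μN μbar1 : Fin q → Measure X)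
    [IsProbabilityMeasure μX]
    [∀ k, IsProbabilityMeasure (μP k)] [∀ k, IsProbabilityMeasure (μN k)]
    [∀ k, IsProbabilityMeasure (μbar1 k)]
    (π πbar ck : Fin q → ℝ) (l : ℝ → ℝ) (f : Fin q → X → ℝ)
    (hl : ∀ z, 0 ≤ l z)
    (hπ : ∀ k, 0 ≤ π k) (hsum : ∑ k, π k = 1)
    -- SCAR
    (hscar : ∀ k, μbar1 k = μN k) (hpibar : ∀ k, πbar k = ck k * (1 - π k))
    -- the marginal density satisfies p(x) = π_k p(x|y=k) + (1−π_k) p(x|y≠k)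
    (hmarg : ∀ k, μX = (ENNReal.ofReal (π k)) • μP k + (ENNReal.ofReal (1 - π k)) • μN k)
    -- (1−π_k) p(x|y≠k) = Σ_{j≠k} π_j p(x|y=j)
    (hrel : ∀ k, (ENNReal.ofReal (1 - π k)) • μN k
      = ∑ j ∈ Finset.univ.erase k, (ENNReal.ofReal (π j)) • μP j)
    (hmeas : ∀ k, Measurable (f k)) (hmeasl : Measurable l)
    (hint : ∀ k j, Integrable (fun x => l (f k x)) (μP j))
    (hint' : ∀ k j, Integrable (fun x => l (-(f k x))) (μP j))
    (hintX : ∀ k, Integrable (fun x => l (f k x)) μX)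
    (hintN : ∀ k, Integrable (fun x => l (f k x)) (μN k))
    (hintN' : ∀ k, Integrable (fun x => l (-(f k x))) (μN k)) :
    ∑ k, (π k) * ∫ x, (l (f k x) + ∑ j ∈ Finset.univ.erase k, l (-(f j x))) ∂(μP k)
      = ∑ k, ((∫ x, l (f k x) ∂μX)
          - (1 - π k) * ∫ x, l (f k x) ∂(μN k)
          + (1 - π k) * ∫ x, l (-(f k x)) ∂(μN k)) := by

  have h1 : ∀ k, 0 ≤ 1 - π k := by
    intro k
    have : π k + ∑ j ∈ Finset.univ.erase k, π j = 1 := by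
      rw [Finset.add_sum_erase _ _ (Finset.mem_univ k), hsum]
    have h2 : (0:ℝ) ≤ ∑ j ∈ Finset.univ.erase k, π j :=
      Finset.sum_nonneg fun j _ => hπ j
    linarith
  have intX : ∀ k, ∫ x, l (f k x) ∂μX
      = π k * ∫ x, l (f k x) ∂(μP k) + (1 - π k) * ∫ x, l (f k x) ∂(μN k) := by
    intro k
    rw [hmarg k, integral_add_measure ((hint k k).smul_measure ENNReal.ofReal_ne_top)
      ((hintN k).smul_measure ENNReal.ofReal_ne_top), integral_smul_measure,
      integral_smul_measure, ENNReal.toReal_ofReal (hπ k), ENNReal.toReal_ofReal (h1 k)]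
    simp [smul_eq_mul]
  have third : ∀ k, (1 - π k) * ∫ x, l (-(f k x)) ∂(μN k)
      = ∑ j ∈ Finset.univ.erase k, π j * ∫ x, l (-(f k x)) ∂(μP j) := by
    intro k
    have : ∫ x, l (-(f k x)) ∂((ENNReal.ofReal (1 - π k)) • μN k)
        = ∫ x, l (-(f k x)) ∂(∑ j ∈ Finset.univ.erase k, (ENNReal.ofReal (π j)) • μP j) := by
      rw [hrel k]
    rw [integral_smul_measure, ENNReal.toReal_ofReal (h1 k),
      integral_finset_sum_measure (fun j _ => (hint' k j).smul_measure ENNReal.ofReal_ne_top)]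
      at this
    rw [smul_eq_mul] at this
    rw [this]
    exact Finset.sum_congr rfl fun j _ => by
      rw [integral_smul_measure, ENNReal.toReal_ofReal (hπ j), smul_eq_mul]
  have expand : ∀ k, ∫ x, (l (f k x) + ∑ j ∈ Finset.univ.erase k, l (-(f j x))) ∂(μP k)
      = (∫ x, l (f k x) ∂(μP k)) + ∑ j ∈ Finset.univ.erase k, ∫ x, l (-(f j x)) ∂(μP k) := by
    intro k
    rw [integral_add (hint k k) (integrable_finset_sum _ fun j _ => hint' j k),
      integral_finset_sum _ fun j _ => hint' j k]
  calc ∑ k, (π k) * ∫ x, (l (f k x) + ∑ j ∈ Finset.univ.erase k, l (-(f j x))) ∂(μP k)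
      = ∑ k, (π k * ∫ x, l (f k x) ∂(μP k)
            + ∑ j ∈ Finset.univ.erase k, π k * ∫ x, l (-(f j x)) ∂(μP k)) := by
        refine Finset.sum_congr rfl fun k _ => ?_
        rw [expand k, mul_add, Finset.mul_sum]
    _ = ∑ k, π k * ∫ x, l (f k x) ∂(μP k)
        + ∑ k, ∑ j ∈ Finset.univ.erase k, π k * ∫ x, l (-(f j x)) ∂(μP k) := by
        rw [Finset.sum_add_distrib]
    _ = ∑ k, π k * ∫ x, l (f k x) ∂(μP k)
        + ∑ k, ∑ j ∈ Finset.univ.erase k, π j * ∫ x, l (-(f k x)) ∂(μP j) := by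
        congr 1
        have : ∀ (A : Fin q → Fin q → ℝ),
            ∑ k, ∑ j ∈ Finset.univ.erase k, A k j = ∑ j, ∑ k ∈ Finset.univ.erase j, A k j := by
          intro A
          have e : ∀ k : Fin q, Finset.univ.erase k = Finset.univ.filter (fun j => j ≠ k) := by
            intro k; ext j; simp [Finset.mem_erase, and_comm]
          simp only [e]
          rw [Finset.sum_comm' (s := Finset.univ) (t := fun k => Finset.univ.filter (fun j => j ≠ k))
            (t' := Finset.univ) (s' := fun j => Finset.univ.filter (fun k => k ≠ j))]
          intro x y; simp [ne_comm]
        exact this (fun k j => π k * ∫ x, l (-(f j x)) ∂(μP k))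
    _ = ∑ k, ((∫ x, l (f k x) ∂μX)
          - (1 - π k) * ∫ x, l (f k x) ∂(μN k)
          + (1 - π k) * ∫ x, l (-(f k x)) ∂(μN k)) := by
        rw [← Finset.sum_add_distrib]
        refine Finset.sum_congr rfl fun k _ => ?_
        rw [intX k, third k]; ring
end
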